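/- Let G = (V, E) be a finite simple 2-edge-connected graph with |V| ≥ 3 and positive edge costs c, and let (G', c') be its inflated instance. If x ∈ P_EC(G), define x' ∈ ℝ^{E'} by x'_{e'} := x_e for the inter-clique edge e' of each e ∈ E, and x'_f := 1 for every clique edge f ∈ F'. Then x' ∈ P_NC(G') and Σ_{e'∈E'} c'_{e'} x'_{e'} = Σ_{e∈E} c_e x_e. -/

import Mathlib

open scoped Classical
open Finset

namespace TwoNCTAP

variable {V : Type*}

/-- The graph `H` with the vertex `u` "deleted": all edges incident to `u` are removed,
so that `u` becomes an isolated vertex. -/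
def delVert (H : SimpleGraph V) (u : V) : SimpleGraph V where
  Adj a b := H.Adj a b ∧ a ≠ u ∧ b ≠ u
  symm := by refine ⟨?_⟩; rintro a b ⟨h, ha, hb⟩; exact ⟨h.symm, hb, ha⟩
  loopless := by refine ⟨?_⟩; rintro a ⟨h, -, -⟩; exact H.irrefl h

/-- The partition of `V ∖ {u}` into the vertex sets of the connected components
of `H − u`. -/
def compPartition (H : SimpleGraph V) (u : V) : Set (Set V) :=
  {S | ∃ v, v ≠ u ∧ S = {w | (delVert H u).Reachable v w}}

/-- `P` is a partition of the set `S`. -/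
def IsPartitionOf (P : Set (Set V)) (S : Set V) : Prop :=
  (∀ B ∈ P, B.Nonempty) ∧ (∀ B ∈ P, B ⊆ S) ∧ ∀ v ∈ S, ∃! B : Set V, B ∈ P ∧ v ∈ B

/-- An edge `e` crosses the partition `P` if its two endpoints lie in different blocks
of `P`. -/
def Crosses (P : Set (Set V)) (e : Sym2 V) : Prop :=
  ∃ v w, e = s(v, w) ∧ ∃ B ∈ P, ∃ C ∈ P, B ≠ C ∧ v ∈ B ∧ w ∈ C

/-- The edge `e` lies in the cut `δ(S)`: it has exactly one endpoint in `S`. -/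
def inCut (S : Set V) (e : Sym2 V) : Prop :=
  ∃ a b, e = s(a, b) ∧ a ∈ S ∧ b ∉ S

/-- `G` is 2-edge-connected: it is connected and remains connected after deleting any
single edge. -/
def TwoEdgeConnected (G : SimpleGraph V) : Prop :=
  G.Connected ∧ ∀ e ∈ G.edgeSet, (G.deleteEdges {e}).Connected

/-- The vertex set of the inflated instance: pairs `(v, e)` with `e ∈ E(G)` and
`v` an endpoint of `e`. -/
abbrev InflVert (G : SimpleGraph V) : Type _ :=
  {p : V × Sym2 V // p.2 ∈ G.edgeSet ∧ p.1 ∈ p.2}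

/-- The inflated graph `G'`: `(v, e)` and `(w, f)` are adjacent iff they are distinct and
either `v = w` (a clique edge) or `e = f` (the inter-clique edge of `e`). -/
def Infl (G : SimpleGraph V) : SimpleGraph (InflVert G) where
  Adj a b := a ≠ b ∧ (a.val.1 = b.val.1 ∨ a.val.2 = b.val.2)
  symm := by
    refine ⟨?_⟩
    rintro a b ⟨h1, h2 | h2⟩
    · exact ⟨h1.symm, Or.inl h2.symm⟩
    · exact ⟨h1.symm, Or.inr h2.symm⟩
  loopless := by refine ⟨?_⟩; rintro a ⟨h, -⟩; exact h rfl

/-- The graph `(V', F')` consisting of the clique edges only. -/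
def cliqueGraph (G : SimpleGraph V) : SimpleGraph (InflVert G) where
  Adj a b := a ≠ b ∧ a.val.1 = b.val.1
  symm := by refine ⟨?_⟩; rintro a b ⟨h1, h2⟩; exact ⟨h1.symm, h2.symm⟩
  loopless := by refine ⟨?_⟩; rintro a ⟨h, -⟩; exact h rfl

variable [Fintype V]

/-- The objective value `Σ_{e ∈ E(H)} c_e x_e` of `x` for costs `c` on the edges of `H`. -/
noncomputable def obj {W : Type*} [Fintype W] (H : SimpleGraph W) (c x : Sym2 W → ℝ) : ℝ :=
  ∑ e ∈ Finset.univ.filter (fun e : Sym2 W => e ∈ H.edgeSet), c e * x e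

/-- The feasible region `P_EC(G)` of the cut LP relaxation of min-cost 2ECSS. -/
def PEC (G : SimpleGraph V) : Set (Sym2 V → ℝ) :=
  {x | (∀ e ∈ G.edgeSet, 0 ≤ x e ∧ x e ≤ 1) ∧
    ∀ S : Set V, S.Nonempty → S ≠ Set.univ →
      (2 : ℝ) ≤ ∑ e ∈ Finset.univ.filter
          (fun e : Sym2 V => e ∈ G.edgeSet ∧ inCut S e), x e}

/-- The feasible region `P_NC(G')` of the partition LP relaxation of min-cost 2NCSS for
the inflated instance: `0 ≤ x ≤ 1`, the cut constraints, and for every `w ∈ V'` and every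
partition `P` of `V' ∖ {w}` whose blocks are unions of vertex sets of connected
components of `(V', F') − w`, the partition constraint. -/
def PNC (G : SimpleGraph V) : Set (Sym2 (InflVert G) → ℝ) :=
  {x | (∀ f ∈ (Infl G).edgeSet, 0 ≤ x f ∧ x f ≤ 1) ∧
    (∀ S : Set (InflVert G), S.Nonempty → S ≠ Set.univ →
      (2 : ℝ) ≤ ∑ f ∈ Finset.univ.filter
          (fun f : Sym2 (InflVert G) => f ∈ (Infl G).edgeSet ∧ inCut S f), x f) ∧
    ∀ (w : InflVert G) (P : Set (Set (InflVert G))),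
      IsPartitionOf P {v | v ≠ w} →
      (∀ B ∈ compPartition (cliqueGraph G) w, ∃ C ∈ P, B ⊆ C) →
      (P.ncard : ℝ) - 1 ≤ ∑ f ∈ Finset.univ.filter
          (fun f : Sym2 (InflVert G) => f ∈ (Infl G).edgeSet ∧ Crosses P f), x f}



section Helpers
variable {G : SimpleGraph V}

lemma sym2_eq_of_mem {z : Sym2 V} {x y : V} (hx : x ∈ z) (hy : y ∈ z) (hxy : x ≠ y) :
    z = s(x, y) := (Sym2.mem_and_mem_iff hxy).mp ⟨hx, hy⟩

lemma inCut_mk {S : Set V} {a b : V} (ha : a ∈ S) (hb : b ∉ S) : inCut S s(a, b) :=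
  ⟨a, b, rfl, ha, hb⟩

lemma inCut_iff {S : Set V} {a b : V} :
    inCut S s(a, b) ↔ (a ∈ S ∧ b ∉ S) ∨ (b ∈ S ∧ a ∉ S) := by
  constructor
  · rintro ⟨p, q, heq, hp, hq⟩
    rcases Sym2.eq_iff.mp heq with ⟨rfl, rfl⟩ | ⟨rfl, rfl⟩
    · exact Or.inl ⟨hp, hq⟩
    · exact Or.inr ⟨hp, hq⟩
  · rintro (⟨hp, hq⟩ | ⟨hp, hq⟩)
    · exact ⟨a, b, rfl, hp, hq⟩
    · exact ⟨b, a, Sym2.eq_swap.symm, hp, hq⟩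

lemma exists_adj_of_reachable {u v : V} (h : G.Reachable u v) (hne : u ≠ v) :
    ∃ y, G.Adj u y := by
  obtain ⟨p⟩ := h
  cases p with
  | nil => exact absurd rfl hne
  | cons h' _ => exact ⟨_, h'⟩

lemma other_end {e : Sym2 V} {v : V} (he : e ∈ G.edgeSet) (hv : v ∈ e) :
    ∃ w, G.Adj v w ∧ e = s(v, w) := by
  induction e with
  | _ a b =>
    rcases Sym2.mem_iff.mp hv with rfl | rfl
    · exact ⟨b, he, rfl⟩
    · exact ⟨a, (G.mem_edgeSet.mp he).symm, Sym2.eq_swap.symm⟩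

lemma sum_le_sum_of_inj {α β : Type*} {s : Finset α} {t : Finset β}
    (i : α → β) (g : α → ℝ) (h : β → ℝ)
    (hi : Set.InjOn i s) (hmem : ∀ a ∈ s, i a ∈ t) (hval : ∀ a ∈ s, g a ≤ h (i a))
    (hnn : ∀ b ∈ t, 0 ≤ h b) : ∑ a ∈ s, g a ≤ ∑ b ∈ t, h b := by
  calc ∑ a ∈ s, g a ≤ ∑ a ∈ s, h (i a) := Finset.sum_le_sum hval
    _ = ∑ b ∈ s.image i, h b := (Finset.sum_image (fun a ha b hb hab => hi ha hb hab)).symm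
    _ ≤ ∑ b ∈ t, h b := Finset.sum_le_sum_of_subset_of_nonneg
        (Finset.image_subset_iff.mpr hmem) (fun b hb _ => hnn b hb)

lemma sym2_exists_rep {α : Type*} (z : Sym2 α) : ∃ p q : α, z = s(p, q) := by
  induction z with
  | _ p q => exact ⟨p, q, rfl⟩

lemma inflVert_ext {a b : InflVert G} (h1 : a.val.1 = b.val.1) (h2 : a.val.2 = b.val.2) :
    a = b := Subtype.ext (Prod.ext h1 h2)

/-- The second projection of an inter-clique pair equals the symmetric pair of the
first projections. -/
lemma snd_eq_pair {a b : InflVert G} (hne : a ≠ b) (h2 : a.val.2 = b.val.2) :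
    a.val.1 ≠ b.val.1 ∧ a.val.2 = s(a.val.1, b.val.1) := by
  have h1 : a.val.1 ≠ b.val.1 := fun h => hne (inflVert_ext h h2)
  exact ⟨h1, sym2_eq_of_mem a.prop.2 (h2 ▸ b.prop.2) h1⟩

lemma exists_incident (hG : G.Connected) [Fintype V] (hV : 3 ≤ Fintype.card V) (v : V) :
    ∃ e ∈ G.edgeSet, v ∈ e := by
  obtain ⟨u, hu⟩ := Fintype.exists_ne_of_one_lt_card (by omega) v
  obtain ⟨y, hy⟩ := exists_adj_of_reachable (hG.preconnected v u) (Ne.symm hu)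
  exact ⟨s(v, y), hy, Sym2.mem_mk_left _ _⟩

lemma exists_second_incident (h2ec : TwoEdgeConnected G) {e : Sym2 V} {v : V}
    (he : e ∈ G.edgeSet) (hv : v ∈ e) :
    ∃ f ∈ G.edgeSet, v ∈ f ∧ f ≠ e := by
  obtain ⟨w, hadj, rfl⟩ := other_end he hv
  have hconn := (h2ec.2 _ he)
  obtain ⟨y, hy⟩ := exists_adj_of_reachable (hconn.preconnected v w) hadj.ne
  rw [SimpleGraph.deleteEdges_adj] at hy
  refine ⟨s(v, y), hy.1, Sym2.mem_mk_left _ _, ?_⟩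
  simpa using hy.2

variable (G) in
/-- The projection of inflated vertices back to `V`, applied to pairs. -/
def psi : Sym2 (InflVert G) → Sym2 V := Sym2.map (fun a => a.val.1)

variable (G) in
/-- The inter-clique pair associated to an edge of `G`. -/
noncomputable def phi [Nonempty (InflVert G)] (g : Sym2 V) : Sym2 (InflVert G) :=
  g.map (fun w => if h : g ∈ G.edgeSet ∧ w ∈ g then ⟨(w, g), h⟩ else Classical.arbitrary _)

lemma phi_eq [Nonempty (InflVert G)] {p q : V} (h : s(p, q) ∈ G.edgeSet) :
    phi G s(p, q) = s(⟨(p, s(p, q)), h, Sym2.mem_mk_left _ _⟩,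
      ⟨(q, s(p, q)), h, Sym2.mem_mk_right _ _⟩) := by
  rw [phi, Sym2.map_pair_eq, dif_pos ⟨h, Sym2.mem_mk_left _ _⟩,
    dif_pos ⟨h, Sym2.mem_mk_right _ _⟩]

lemma psi_phi [Nonempty (InflVert G)] {g : Sym2 V} (h : g ∈ G.edgeSet) :
    psi G (phi G g) = g := by
  induction g with
  | _ p q => rw [phi_eq h, psi, Sym2.map_pair_eq]

lemma phi_mem_edgeSet [Nonempty (InflVert G)] {g : Sym2 V} (h : g ∈ G.edgeSet) :
    phi G g ∈ (Infl G).edgeSet := by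
  induction g with
  | _ p q =>
    rw [phi_eq h, SimpleGraph.mem_edgeSet]
    have hpq : p ≠ q := (G.mem_edgeSet.mp h).ne
    exact ⟨fun hc => hpq (congrArg (fun a => a.val.1) hc), Or.inr rfl⟩

end Helpers


/-- Let `G` be 2-edge-connected with positive edge costs `c`, and let
`(G', c')` be its inflated instance. If `x ∈ P_EC(G)` and `x'` is obtained from `x` by
putting `x'_{e'} := x_e` on the inter-clique edge `e'` of each `e ∈ E`, and `x'_f := 1`
on every clique edge `f ∈ F'`, then `x' ∈ P_NC(G')` and the two objective values agree. -/
theorem inflation_EC_to_NC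
    (G : SimpleGraph V) (hV : 3 ≤ Fintype.card V) (h2ec : TwoEdgeConnected G)
    (c : Sym2 V → ℝ) (hc : ∀ e ∈ G.edgeSet, 0 < c e)
    (c' : Sym2 (InflVert G) → ℝ)
    (hc'cl : ∀ a b : InflVert G, a ≠ b → a.val.1 = b.val.1 → c' s(a, b) = 0)
    (hc'in : ∀ a b : InflVert G, a ≠ b → a.val.2 = b.val.2 → c' s(a, b) = c a.val.2)
    (x : Sym2 V → ℝ) (hx : x ∈ PEC G)
    (x' : Sym2 (InflVert G) → ℝ)
    (hx'cl : ∀ a b : InflVert G, a ≠ b → a.val.1 = b.val.1 → x' s(a, b) = 1)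
    (hx'in : ∀ a b : InflVert G, a ≠ b → a.val.2 = b.val.2 → x' s(a, b) = x a.val.2) :
    x' ∈ PNC G ∧ obj (Infl G) c' x' = obj G c x := by
  classical
  have hG : G.Connected := h2ec.1
  obtain ⟨v₀⟩ : Nonempty V := Fintype.card_pos_iff.mp (by omega)
  obtain ⟨e₀x, he₀x, hv₀x⟩ := exists_incident hG hV v₀
  haveI : Nonempty (InflVert G) := ⟨⟨(v₀, e₀x), he₀x, hv₀x⟩⟩
  have hxe := hx.1
  -- Part 1: bounds on x'
  have hbound : ∀ f ∈ (Infl G).edgeSet, 0 ≤ x' f ∧ x' f ≤ 1 := by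
    intro f hf
    induction f with
    | _ a b =>
      obtain ⟨hne, hor⟩ := (Infl G).mem_edgeSet.mp hf
      rcases hor with h1 | h2
      · rw [hx'cl a b hne h1]; norm_num
      · rw [hx'in a b hne h2]; exact hxe _ a.prop.1
  have hnn : ∀ f ∈ (Infl G).edgeSet, 0 ≤ x' f := fun f hf => (hbound f hf).1
  have hx'phi : ∀ g ∈ G.edgeSet, x' (phi G g) = x g := by
    intro g hg
    induction g with
    | _ p q =>
      have hpq : p ≠ q := (G.mem_edgeSet.mp hg).ne
      rw [phi_eq hg]
      exact hx'in _ _ (fun hc => hpq (congrArg (fun z : InflVert G => z.val.1) hc)) rfl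
  have hc'phi : ∀ g ∈ G.edgeSet, c' (phi G g) = c g := by
    intro g hg
    induction g with
    | _ p q =>
      have hpq : p ≠ q := (G.mem_edgeSet.mp hg).ne
      rw [phi_eq hg]
      exact hc'in _ _ (fun hc => hpq (congrArg (fun z : InflVert G => z.val.1) hc)) rfl
  have hexrep : ∀ z : Sym2 V, ∃ p q : V, z = s(p, q) := by
    intro z; induction z with
    | _ p q => exact ⟨p, q, rfl⟩
  -- Part 2: cut constraints
  have part2 : ∀ S : Set (InflVert G), S.Nonempty → S ≠ Set.univ →
      (2 : ℝ) ≤ ∑ f ∈ Finset.univ.filter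
          (fun f : Sym2 (InflVert G) => f ∈ (Infl G).edgeSet ∧ inCut S f), x' f := by
    intro S hSne hSuniv
    obtain ⟨p0, hp0⟩ := hSne
    obtain ⟨q0, hq0⟩ := (Set.ne_univ_iff_exists_notMem S).mp hSuniv
    set cutF := Finset.univ.filter
        (fun f : Sym2 (InflVert G) => f ∈ (Infl G).edgeSet ∧ inCut S f) with hcutFdef
    by_cases hsplit : ∃ a b : InflVert G, a.val.1 = b.val.1 ∧ a ∈ S ∧ b ∉ S
    case neg =>
      push_neg at hsplit
      set T : Set V := {z | ∃ a : InflVert G, a.val.1 = z ∧ a ∈ S} with hTdef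
      have hTmem : ∀ d : InflVert G, d.val.1 ∈ T ↔ d ∈ S := by
        intro d
        constructor
        · rintro ⟨a, ha1, ha2⟩; exact hsplit a d ha1 ha2
        · intro hd; exact ⟨d, rfl, hd⟩
      have hT1 : p0.val.1 ∈ T := (hTmem p0).mpr hp0
      have hT2 : q0.val.1 ∉ T := fun h => hq0 ((hTmem q0).mp h)
      have hcut := hx.2 T ⟨_, hT1⟩
        ((Set.ne_univ_iff_exists_notMem T).mpr ⟨_, hT2⟩)
      refine le_trans hcut (sum_le_sum_of_inj (phi G) x x' ?_ ?_ ?_ ?_)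
      · intro g1 h1 g2 h2 h12
        simp only [Finset.coe_filter, Set.mem_setOf_eq] at h1 h2
        rw [← psi_phi h1.2.1, ← psi_phi h2.2.1, h12]
      · intro g hg
        obtain ⟨-, hgE, hgcut⟩ := Finset.mem_filter.mp hg
        obtain ⟨p, q, rfl, hpT, hqT⟩ := hgcut
        refine Finset.mem_filter.mpr ⟨Finset.mem_univ _, phi_mem_edgeSet hgE, ?_⟩
        rw [phi_eq hgE]
        refine inCut_mk ?_ ?_
        · exact (hTmem ⟨(p, s(p, q)), hgE, Sym2.mem_mk_left _ _⟩).mp hpT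
        · exact fun hS => hqT ((hTmem ⟨(q, s(p, q)), hgE, Sym2.mem_mk_right _ _⟩).mpr hS)
      · intro g hg
        exact le_of_eq (hx'phi g (Finset.mem_filter.mp hg).2.1).symm
      · exact fun f hf => hnn f (Finset.mem_filter.mp hf).2.1
    case pos =>
      obtain ⟨a0, b0, hab1, ha0S, hb0S⟩ := hsplit
      set v := a0.val.1 with hvdef
      have hne0 : a0 ≠ b0 := fun h => hb0S (h ▸ ha0S)
      have hf1E : s(a0, b0) ∈ (Infl G).edgeSet := (Infl G).mem_edgeSet.mpr ⟨hne0, Or.inl hab1⟩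
      have hf1mem : s(a0, b0) ∈ cutF :=
        Finset.mem_filter.mpr ⟨Finset.mem_univ _, hf1E, inCut_mk ha0S hb0S⟩
      have hx'f1 : x' s(a0, b0) = 1 := hx'cl a0 b0 hne0 hab1
      have pairDone : ∀ f2, f2 ∈ cutF → f2 ≠ s(a0, b0) → 1 ≤ x' f2 →
          (2 : ℝ) ≤ ∑ f ∈ cutF, x' f := by
        intro f2 hf2 hne2 hval2
        have hsub : ({s(a0, b0), f2} : Finset (Sym2 (InflVert G))) ⊆ cutF := by
          intro f hf
          rcases Finset.mem_insert.mp hf with rfl | hf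
          · exact hf1mem
          · rw [Finset.mem_singleton.mp hf]; exact hf2
        have hles := Finset.sum_le_sum_of_subset_of_nonneg hsub
          (fun f hf _ => hnn f (Finset.mem_filter.mp hf).2.1)
        rw [Finset.sum_pair (Ne.symm hne2)] at hles
        linarith
      by_cases hB1 : ∃ a b : InflVert G, a.val.1 = b.val.1 ∧ a.val.1 ≠ v ∧ a ∈ S ∧ b ∉ S
      · obtain ⟨a', b', h1', hvne, haS', hbS'⟩ := hB1
        have hne' : a' ≠ b' := fun h => hbS' (h ▸ haS')
        refine pairDone s(a', b') (Finset.mem_filter.mpr ⟨Finset.mem_univ _,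
          (Infl G).mem_edgeSet.mpr ⟨hne', Or.inl h1'⟩, inCut_mk haS' hbS'⟩) ?_
          (le_of_eq (hx'cl a' b' hne' h1').symm)
        intro hc
        rcases Sym2.eq_iff.mp hc with ⟨h1, -⟩ | ⟨h1, -⟩
        · exact hvne (congrArg (fun d : InflVert G => d.val.1) h1)
        · exact hvne ((congrArg (fun d : InflVert G => d.val.1) h1).trans hab1.symm)
      by_cases hB2 : ∃ a' : InflVert G, a'.val.1 = v ∧ a' ≠ a0 ∧ a' ∈ S
      · obtain ⟨a', ha'1, ha'ne, ha'S⟩ := hB2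
        have hne' : a' ≠ b0 := fun h => hb0S (h ▸ ha'S)
        refine pairDone s(a', b0) (Finset.mem_filter.mpr ⟨Finset.mem_univ _,
          (Infl G).mem_edgeSet.mpr ⟨hne', Or.inl (ha'1.trans hab1)⟩, inCut_mk ha'S hb0S⟩) ?_
          (le_of_eq (hx'cl a' b0 hne' (ha'1.trans hab1)).symm)
        intro hc
        rcases Sym2.eq_iff.mp hc with ⟨h1, -⟩ | ⟨-, h2⟩
        · exact ha'ne h1
        · exact hne0 h2.symm
      by_cases hB3 : ∃ b' : InflVert G, b'.val.1 = v ∧ b' ≠ b0 ∧ b' ∉ S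
      · obtain ⟨b', hb'1, hb'ne, hb'S⟩ := hB3
        have hne' : a0 ≠ b' := fun h => hb'S (h ▸ ha0S)
        refine pairDone s(a0, b') (Finset.mem_filter.mpr ⟨Finset.mem_univ _,
          (Infl G).mem_edgeSet.mpr ⟨hne', Or.inl hb'1.symm⟩, inCut_mk ha0S hb'S⟩) ?_
          (le_of_eq (hx'cl a0 b' hne' hb'1.symm).symm)
        intro hc
        rcases Sym2.eq_iff.mp hc with ⟨-, h2⟩ | ⟨h1, -⟩
        · exact hb'ne h2
        · exact hne0 h1
      -- Case B4: the clique at v consists exactly of a0 and b0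
      push_neg at hB2 hB3
      have hclique : ∀ cI : InflVert G, cI.val.1 = v → cI = a0 ∨ cI = b0 := by
        intro cI hc
        by_cases h : cI = a0
        · exact Or.inl h
        · by_cases h' : cI = b0
          · exact Or.inr h'
          · exact absurd (hB3 cI hc h') (fun hS => (hB2 cI hc h) hS)
      set e := a0.val.2 with hedef
      set f := b0.val.2 with hfdef
      have hef : e ≠ f := fun h => hne0 (inflVert_ext hab1 h)
      have heE : e ∈ G.edgeSet := a0.prop.1
      have hfE : f ∈ G.edgeSet := b0.prop.1
      have hveE : v ∈ e := a0.prop.2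
      have hvfE : v ∈ f := hab1 ▸ b0.prop.2
      obtain ⟨u', hu'⟩ := Fintype.exists_ne_of_one_lt_card (by omega) v
      have hcutv := hx.2 {v} ⟨v, rfl⟩
        ((Set.ne_univ_iff_exists_notMem _).mpr ⟨u', hu'⟩)
      have hfilter_eq : Finset.univ.filter
          (fun g : Sym2 V => g ∈ G.edgeSet ∧ inCut {v} g) = {e, f} := by
        ext g
        simp only [Finset.mem_filter, Finset.mem_univ, true_and, Finset.mem_insert,
          Finset.mem_singleton]
        constructor
        · rintro ⟨hgE, p, q, rfl, hp, hq⟩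
          have hp' : p = v := hp
          rcases hclique ⟨(p, s(p, q)), hgE, Sym2.mem_mk_left _ _⟩ hp' with h | h
          · exact Or.inl (congrArg (fun d : InflVert G => d.val.2) h)
          · exact Or.inr (congrArg (fun d : InflVert G => d.val.2) h)
        · rintro (rfl | rfl)
          · obtain ⟨w1, hadj1, hrep1⟩ := other_end heE hveE
            exact ⟨heE, hrep1 ▸ inCut_mk rfl hadj1.ne'⟩
          · obtain ⟨w1, hadj1, hrep1⟩ := other_end hfE hvfE
            exact ⟨hfE, hrep1 ▸ inCut_mk rfl hadj1.ne'⟩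
      rw [hfilter_eq, Finset.sum_pair hef] at hcutv
      have hxe1 : 1 ≤ x e := by have := (hxe f hfE).2; linarith
      have hxf1 : 1 ≤ x f := by have := (hxe e heE).2; linarith
      obtain ⟨w, hadjw, hew⟩ := other_end heE hveE
      obtain ⟨u, hadju, hfu⟩ := other_end hfE hvfE
      set mw : InflVert G := ⟨(w, e), heE, hew ▸ Sym2.mem_mk_right v w⟩ with hmwdef
      set mu : InflVert G := ⟨(u, f), hfE, hfu ▸ Sym2.mem_mk_right v u⟩ with hmudef
      have hmwa0 : mw ≠ a0 := fun h => hadjw.ne' (congrArg (fun d : InflVert G => d.val.1) h)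
      have hmub0 : mu ≠ b0 := by
        intro h
        exact hadju.ne' ((congrArg (fun d : InflVert G => d.val.1) h).trans hab1.symm)
      by_cases hmw : mw ∈ S
      case neg =>
        refine pairDone s(a0, mw) (Finset.mem_filter.mpr ⟨Finset.mem_univ _,
          (Infl G).mem_edgeSet.mpr ⟨Ne.symm hmwa0, Or.inr rfl⟩, inCut_mk ha0S hmw⟩) ?_ ?_
        · intro hc
          rcases Sym2.eq_iff.mp hc with ⟨-, h2⟩ | ⟨h1, -⟩
          · have h3 : mw.val.2 = b0.val.2 := congrArg (fun d : InflVert G => d.val.2) h2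
            exact hef h3
          · exact hne0 h1
        · rw [hx'in a0 mw (Ne.symm hmwa0) rfl]; exact hxe1
      by_cases hmu : mu ∈ S
      case pos =>
        refine pairDone s(mu, b0) (Finset.mem_filter.mpr ⟨Finset.mem_univ _,
          (Infl G).mem_edgeSet.mpr ⟨hmub0, Or.inr rfl⟩, inCut_mk hmu hb0S⟩) ?_ ?_
        · intro hc
          rcases Sym2.eq_iff.mp hc with ⟨h1, -⟩ | ⟨h1, -⟩
          · have h3 : mu.val.2 = a0.val.2 := congrArg (fun d : InflVert G => d.val.2) h1
            exact hef h3.symm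
          · exact hmub0 h1
        · rw [hx'in mu b0 hmub0 rfl]; exact hxf1
      -- Case B4c
      case neg =>
        push_neg at hB1
        set T' : Set V := insert v {z | z ≠ v ∧ ∀ cI : InflVert G, cI.val.1 = z → cI ∈ S}
          with hT'def
        have hwT' : w ∈ T' := by
          refine Set.mem_insert_iff.mpr (Or.inr ⟨hadjw.ne', ?_⟩)
          intro cI hcI
          have h4 : mw.val.1 = cI.val.1 := hcI.symm
          have h5 : mw.val.1 ≠ v := fun h => hadjw.ne' h
          exact hB1 mw cI h4 h5 hmw
        have huT' : u ∉ T' := by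
          intro h
          rcases Set.mem_insert_iff.mp h with h | ⟨-, hall⟩
          · exact hadju.ne' h
          · exact hmu (hall mu rfl)
        have hcutT := hx.2 T' ⟨v, Set.mem_insert _ _⟩
          ((Set.ne_univ_iff_exists_notMem _).mpr ⟨u, huT'⟩)
        refine le_trans hcutT (sum_le_sum_of_inj
          (fun g => if g = f then s(a0, b0) else phi G g) x x' ?_ ?_ ?_ ?_)
        · intro g1 h1 g2 h2 h12
          simp only [Finset.coe_filter, Set.mem_setOf_eq] at h1 h2
          by_cases hg1 : g1 = f <;> by_cases hg2 : g2 = f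
          · rw [hg1, hg2]
          · exfalso
            simp only [if_pos hg1, if_neg hg2] at h12
            have hthis := congrArg (psi G) h12
            rw [psi_phi h2.2.1] at hthis
            obtain ⟨p, q, rfl⟩ := hexrep g2
            have hpq : p ≠ q := (G.mem_edgeSet.mp h2.2.1).ne
            rw [psi, Sym2.map_pair_eq] at hthis
            rcases Sym2.eq_iff.mp hthis with ⟨h1, h2⟩ | ⟨h1, h2⟩
            · exact hpq ((h1.symm.trans hab1).trans h2)
            · exact hpq ((h2.symm.trans hab1.symm).trans h1)
          · exfalso
            simp only [if_neg hg1, if_pos hg2] at h12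
            have hthis := congrArg (psi G) h12
            rw [psi_phi h1.2.1] at hthis
            obtain ⟨p, q, rfl⟩ := hexrep g1
            have hpq : p ≠ q := (G.mem_edgeSet.mp h1.2.1).ne
            rw [psi, Sym2.map_pair_eq] at hthis
            rcases Sym2.eq_iff.mp hthis.symm with ⟨h1', h2'⟩ | ⟨h1', h2'⟩
            · exact hpq ((h1'.symm.trans hab1).trans h2')
            · exact hpq ((h2'.symm.trans hab1.symm).trans h1')
          · simp only [if_neg hg1, if_neg hg2] at h12
            rw [← psi_phi h1.2.1, ← psi_phi h2.2.1, h12]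
        · intro g hg
          obtain ⟨-, hgE, hgcut⟩ := Finset.mem_filter.mp hg
          by_cases hgf : g = f
          · simp only [if_pos hgf]; exact hf1mem
          · simp only [if_neg hgf]
            obtain ⟨p, q, rfl, hpT, hqT⟩ := hgcut
            have hqv : q ≠ v := by
              rintro rfl
              exact hqT (Set.mem_insert _ _)
            have hqS : (⟨(q, s(p, q)), hgE, Sym2.mem_mk_right _ _⟩ : InflVert G) ∉ S := by
              intro hS
              have hq' : ¬(q ≠ v ∧ ∀ cI : InflVert G, cI.val.1 = q → cI ∈ S) := by
                intro hcon
                exact hqT (Set.mem_insert_iff.mpr (Or.inr hcon))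
              push_neg at hq'
              obtain ⟨c0, hc01, hc02⟩ := hq' hqv
              exact hc02 (hB1 _ c0 hc01.symm hqv hS)
            have hpS : (⟨(p, s(p, q)), hgE, Sym2.mem_mk_left _ _⟩ : InflVert G) ∈ S := by
              rcases Set.mem_insert_iff.mp hpT with hpv0 | ⟨hpv, hall⟩
              · exfalso
                rcases hclique ⟨(p, s(p, q)), hgE, Sym2.mem_mk_left _ _⟩ hpv0 with h | h
                · have hge : s(p, q) = e := congrArg (fun d : InflVert G => d.val.2) h
                  have hge2 : s(p, q) = s(v, w) := hge.trans hew
                  rcases Sym2.eq_iff.mp hge2 with ⟨-, h2⟩ | ⟨h1, -⟩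
                  · exact hqT (h2 ▸ hwT')
                  · exact hadjw.ne (hpv0.symm.trans h1)
                · exact hgf (congrArg (fun d : InflVert G => d.val.2) h)
              · exact hall _ rfl
            refine Finset.mem_filter.mpr ⟨Finset.mem_univ _, phi_mem_edgeSet hgE, ?_⟩
            rw [phi_eq hgE]
            exact inCut_mk hpS hqS
        · intro g hg
          obtain ⟨-, hgE, -⟩ := Finset.mem_filter.mp hg
          by_cases hgf : g = f
          · simp only [if_pos hgf, hx'f1]
            rw [hgf]; exact (hxe f hfE).2
          · simp only [if_neg hgf]
            exact le_of_eq (hx'phi g hgE).symm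
        · exact fun f' hf' => hnn f' (Finset.mem_filter.mp hf').2.1
  -- Part 3: partition constraints
  have part3 : ∀ (w0 : InflVert G) (P : Set (Set (InflVert G))),
      IsPartitionOf P {v | v ≠ w0} →
      (∀ B ∈ compPartition (cliqueGraph G) w0, ∃ C ∈ P, B ⊆ C) →
      (P.ncard : ℝ) - 1 ≤ ∑ f ∈ Finset.univ.filter
          (fun f : Sym2 (InflVert G) => f ∈ (Infl G).edgeSet ∧ Crosses P f), x' f := by
    intro w0 P hP hcomp
    set TF := Finset.univ.filter
        (fun f : Sym2 (InflVert G) => f ∈ (Infl G).edgeSet ∧ Crosses P f) with hTFdef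
    have hTFnn : (0:ℝ) ≤ ∑ f ∈ TF, x' f :=
      Finset.sum_nonneg fun f hf => hnn f (Finset.mem_filter.mp hf).2.1
    have hex : ∀ z : V, ∃ d : InflVert G, d.val.1 = z ∧ d ≠ w0 := by
      intro z
      by_cases hz : z = w0.val.1
      · obtain ⟨g, hgE, hzg, hgne⟩ := exists_second_incident h2ec w0.prop.1 w0.prop.2
        refine ⟨⟨(z, g), hgE, by rw [hz]; exact hzg⟩, rfl, ?_⟩
        intro hcm
        exact hgne (congrArg (fun d : InflVert G => d.val.2) hcm)
      · obtain ⟨g, hgE, hzg⟩ := exists_incident hG hV z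
        exact ⟨⟨(z, g), hgE, hzg⟩, rfl,
          fun hcm => hz (congrArg (fun d : InflVert G => d.val.1) hcm)⟩
    choose cz hcz1 hcz2 using hex
    have h3 : ∀ z : V, ∃ B, (B ∈ P ∧ cz z ∈ B) ∧
        ∀ B' : Set (InflVert G), (B' ∈ P ∧ cz z ∈ B') → B' = B := fun z =>
      hP.2.2 (cz z) (hcz2 z)
    choose β hβ hβu using h3
    have hβP : ∀ z, β z ∈ P := fun z => (hβ z).1
    have hK : ∀ d : InflVert G, d ≠ w0 → d ∈ β d.val.1 := by
      intro d hd
      have hcm : {c0 : InflVert G | (delVert (cliqueGraph G) w0).Reachable (cz d.val.1) c0}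
          ∈ compPartition (cliqueGraph G) w0 := ⟨cz d.val.1, hcz2 _, rfl⟩
      obtain ⟨C, hC, hsub⟩ := hcomp _ hcm
      have hczC : cz d.val.1 ∈ C := hsub (SimpleGraph.Reachable.refl _)
      have hCeq : C = β d.val.1 := hβu _ C ⟨hC, hczC⟩
      by_cases hdc : cz d.val.1 = d
      · exact hCeq ▸ (hdc ▸ hczC)
      · have hadj : (delVert (cliqueGraph G) w0).Adj (cz d.val.1) d :=
          ⟨⟨hdc, hcz1 _⟩, hcz2 _, hd⟩
        exact hCeq ▸ hsub hadj.reachable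
    have hK2 : ∀ B ∈ P, ∃ z : V, β z = B := by
      intro B hB
      obtain ⟨d, hd⟩ := hP.1 B hB
      have hdw : d ≠ w0 := hP.2.1 B hB hd
      exact ⟨d.val.1, (hP.2.2 d hdw).unique ⟨hβP _, hK d hdw⟩ ⟨hB, hd⟩⟩
    have hPfin : P.Finite := Set.toFinite P
    by_cases hP1 : P.ncard ≤ 1
    · have hle : (P.ncard : ℝ) ≤ 1 := by exact_mod_cast hP1
      linarith
    push_neg at hP1
    set PF := hPfin.toFinset with hPFdef
    have hPFcard : PF.card = P.ncard := (Set.ncard_eq_toFinset_card P hPfin).symm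
    set EF := Finset.univ.filter (fun g : Sym2 V => g ∈ G.edgeSet) with hEFdef
    set crossQ : Sym2 V → Prop := fun g => ∃ p q : V, g = s(p, q) ∧ β p ≠ β q
      with hcrossQdef
    have hblocksum : ∀ B ∈ PF,
        (2:ℝ) ≤ ∑ g ∈ EF, (if inCut {z : V | β z = B} g then x g else 0) := by
      intro B hB
      rw [Set.Finite.mem_toFinset] at hB
      obtain ⟨z1, hz1⟩ := hK2 B hB
      obtain ⟨B', hB'P, hBne⟩ := Set.exists_ne_of_one_lt_ncard hP1 B
      obtain ⟨z2, hz2⟩ := hK2 B' hB'P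
      have hcut := hx.2 {z : V | β z = B} ⟨z1, hz1⟩
        ((Set.ne_univ_iff_exists_notMem _).mpr ⟨z2, fun h => hBne (hz2.symm.trans h)⟩)
      calc (2:ℝ) ≤ ∑ g ∈ Finset.univ.filter
            (fun g : Sym2 V => g ∈ G.edgeSet ∧ inCut {z : V | β z = B} g), x g := hcut
        _ = ∑ g ∈ EF, (if inCut {z : V | β z = B} g then x g else 0) := by
            rw [hEFdef, Finset.sum_filter, Finset.sum_filter]
            refine Finset.sum_congr rfl fun g _ => ?_
            by_cases h1 : g ∈ G.edgeSet <;> by_cases h2 : inCut {z : V | β z = B} g <;>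
              simp [h1, h2]
    have hsum1 : (2:ℝ) * PF.card ≤
        ∑ B ∈ PF, ∑ g ∈ EF, (if inCut {z : V | β z = B} g then x g else 0) := by
      have h := Finset.sum_le_sum hblocksum
      rw [Finset.sum_const] at h
      calc (2:ℝ) * PF.card = PF.card • (2:ℝ) := by rw [nsmul_eq_mul]; ring
        _ ≤ _ := h
    rw [Finset.sum_comm] at hsum1
    have hinner : ∀ g ∈ EF, ∑ B ∈ PF, (if inCut {z : V | β z = B} g then x g else 0)
        = if crossQ g then 2 * x g else 0 := by
      intro g hg
      have hgE : g ∈ G.edgeSet := (Finset.mem_filter.mp hg).2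
      obtain ⟨p, q, rfl⟩ := hexrep g
      have hpq : p ≠ q := (G.mem_edgeSet.mp hgE).ne
      by_cases hcc : β p = β q
      · rw [if_neg ?hcq]
        case hcq =>
          rintro ⟨p', q', heq, hne'⟩
          rcases Sym2.eq_iff.mp heq with ⟨h1, h2⟩ | ⟨h1, h2⟩
          · exact hne' (by rw [← h1, ← h2]; exact hcc)
          · exact hne' (by rw [← h2, ← h1]; exact hcc.symm)
        refine Finset.sum_eq_zero fun B hB => ?_
        rw [if_neg]
        intro hcut
        rcases inCut_iff.mp hcut with ⟨h1, h2⟩ | ⟨h1, h2⟩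
        · exact h2 (show β q = B from hcc.symm.trans h1)
        · exact h2 (show β p = B from hcc.trans h1)
      · rw [if_pos ⟨p, q, rfl, hcc⟩]
        have hrw : ∀ B ∈ PF, (if inCut {z : V | β z = B} s(p, q) then x s(p, q) else 0)
            = if B = β p ∨ B = β q then x s(p, q) else 0 := by
          intro B hB
          refine if_congr ?_ rfl rfl
          rw [inCut_iff]
          constructor
          · rintro (⟨h1, -⟩ | ⟨h1, -⟩)
            · exact Or.inl (show β p = B from h1).symm
            · exact Or.inr (show β q = B from h1).symm
          · rintro (rfl | rfl)
            · exact Or.inl ⟨rfl, fun h => hcc (show β q = β p from h).symm⟩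
            · exact Or.inr ⟨rfl, fun h => hcc (show β p = β q from h)⟩
        rw [Finset.sum_congr rfl hrw, ← Finset.sum_filter]
        have hfe : PF.filter (fun B => B = β p ∨ B = β q) = {β p, β q} := by
          ext B
          simp only [Finset.mem_filter, Set.Finite.mem_toFinset, Finset.mem_insert,
            Finset.mem_singleton]
          constructor
          · exact fun h => h.2
          · rintro (rfl | rfl)
            · exact ⟨(Set.Finite.mem_toFinset hPfin).mpr (hβP p), Or.inl rfl⟩
            · exact ⟨(Set.Finite.mem_toFinset hPfin).mpr (hβP q), Or.inr rfl⟩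
        rw [hfe, Finset.sum_pair hcc]
        ring
    rw [Finset.sum_congr rfl hinner] at hsum1
    have h2x : ∑ g ∈ EF, (if crossQ g then 2 * x g else 0)
        = 2 * ∑ g ∈ EF, (if crossQ g then x g else 0) := by
      rw [Finset.mul_sum]
      refine Finset.sum_congr rfl fun g _ => ?_
      split_ifs <;> ring
    rw [h2x] at hsum1
    have hcard_le : (PF.card : ℝ) ≤ ∑ g ∈ EF, (if crossQ g then x g else 0) := by
      linarith
    rw [← Finset.sum_filter] at hcard_le
    set CrossE := EF.filter crossQ with hCrossEdef
    set e0 := w0.val.2 with he0def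
    have he0E : e0 ∈ G.edgeSet := w0.prop.1
    have hmemE : ∀ g ∈ CrossE.erase e0, g ∈ G.edgeSet := by
      intro g hgm
      have h := (Finset.mem_erase.mp hgm).2
      rw [hCrossEdef, Finset.mem_filter] at h
      exact (Finset.mem_filter.mp h.1).2
    have hinj2 : ∑ g ∈ CrossE.erase e0, x g ≤ ∑ f ∈ TF, x' f := by
      refine sum_le_sum_of_inj (phi G) x x' ?_ ?_ ?_ ?_
      · intro g1 h1 g2 h2 h12
        rw [← psi_phi (hmemE g1 h1), ← psi_phi (hmemE g2 h2), h12]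
      · intro g hg
        have hgE := hmemE g hg
        have hgne0 : g ≠ e0 := (Finset.mem_erase.mp hg).1
        have hcross : crossQ g := by
          have h := (Finset.mem_erase.mp hg).2
          rw [hCrossEdef, Finset.mem_filter] at h
          exact h.2
        obtain ⟨p, q, hrep, hβne⟩ := hcross
        subst hrep
        refine Finset.mem_filter.mpr ⟨Finset.mem_univ _, phi_mem_edgeSet hgE, ?_⟩
        rw [phi_eq hgE]
        have hnw1 : (⟨(p, s(p, q)), hgE, Sym2.mem_mk_left _ _⟩ : InflVert G) ≠ w0 := by
          intro hcm
          exact hgne0 (congrArg (fun d : InflVert G => d.val.2) hcm)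
        have hnw2 : (⟨(q, s(p, q)), hgE, Sym2.mem_mk_right _ _⟩ : InflVert G) ≠ w0 := by
          intro hcm
          exact hgne0 (congrArg (fun d : InflVert G => d.val.2) hcm)
        exact ⟨_, _, rfl, β p, hβP p, β q, hβP q, hβne, hK _ hnw1, hK _ hnw2⟩
      · intro g hg
        exact le_of_eq (hx'phi g (hmemE g hg)).symm
      · exact fun f hf => hnn f (Finset.mem_filter.mp hf).2.1
    have herase : ∑ g ∈ CrossE, x g - x e0 ≤ ∑ g ∈ CrossE.erase e0, x g := by
      by_cases he : e0 ∈ CrossE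
      · rw [Finset.sum_erase_eq_sub he]
      · rw [Finset.erase_eq_of_notMem he]
        have := (hxe e0 he0E).1
        linarith
    have hxe0 : x e0 ≤ 1 := (hxe e0 he0E).2
    have hcast : (P.ncard : ℝ) = (PF.card : ℝ) := by rw [hPFcard]
    rw [hcast]
    linarith
  -- objective values agree
  have hobj : obj (Infl G) c' x' = obj G c x := by
    rw [obj, obj]
    have hinterP : ∀ f ∈ Finset.univ.filter
        (fun f : Sym2 (InflVert G) => f ∈ (Infl G).edgeSet),
        c' f * x' f ≠ 0 → (∃ a b : InflVert G, f = s(a, b) ∧ a ≠ b ∧ a.val.2 = b.val.2) := by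
      intro f hf hne
      have hfE : f ∈ (Infl G).edgeSet := (Finset.mem_filter.mp hf).2
      obtain ⟨a, b, rfl⟩ := sym2_exists_rep f
      obtain ⟨hab, hor⟩ := (Infl G).mem_edgeSet.mp hfE
      rcases hor with h1 | h2
      · exact absurd (by rw [hc'cl a b hab h1]; ring) hne
      · exact ⟨a, b, rfl, hab, h2⟩
    rw [← Finset.sum_filter_of_ne hinterP]
    refine Finset.sum_bij (fun f _ => psi G f) ?_ ?_ ?_ ?_
    · intro f hf
      obtain ⟨hf1, a, b, rfl, hab, h2ab⟩ := Finset.mem_filter.mp hf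
      refine Finset.mem_filter.mpr ⟨Finset.mem_univ _, ?_⟩
      show psi G s(a, b) ∈ G.edgeSet
      have hpsieq : psi G s(a, b) = a.val.2 := by
        rw [psi, Sym2.map_pair_eq]
        exact (snd_eq_pair hab h2ab).2.symm
      rw [hpsieq]
      exact a.prop.1
    · intro f1 hf1 f2 hf2 h12
      obtain ⟨-, a, b, rfl, hab, h2ab⟩ := Finset.mem_filter.mp hf1
      obtain ⟨-, a', b', rfl, hab', h2ab'⟩ := Finset.mem_filter.mp hf2
      simp only [psi, Sym2.map_pair_eq] at h12
      have hpair := (snd_eq_pair hab h2ab).2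
      have hpair' := (snd_eq_pair hab' h2ab').2
      rcases Sym2.eq_iff.mp h12 with ⟨h1, h2⟩ | ⟨h1, h2⟩
      · have hsnd : a.val.2 = a'.val.2 := by
          rw [hpair, hpair', h1, h2]
        have ha : a = a' := inflVert_ext h1 hsnd
        have hb : b = b' := inflVert_ext h2 (h2ab.symm.trans (hsnd.trans h2ab'))
        rw [ha, hb]
      · have hsnd : a.val.2 = a'.val.2 := by
          rw [hpair, hpair', h1, h2]
          exact Sym2.eq_swap
        have ha : a = b' := inflVert_ext h1 (hsnd.trans h2ab')
        have hb : b = a' := inflVert_ext h2 (h2ab.symm.trans hsnd)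
        rw [ha, hb]
        exact Sym2.eq_swap
    · intro e he
      have hgE : e ∈ G.edgeSet := (Finset.mem_filter.mp he).2
      obtain ⟨p, q, rfl⟩ := sym2_exists_rep e
      have hpq : p ≠ q := (G.mem_edgeSet.mp hgE).ne
      refine ⟨phi G s(p, q), ?_, psi_phi hgE⟩
      refine Finset.mem_filter.mpr ⟨Finset.mem_filter.mpr
        ⟨Finset.mem_univ _, phi_mem_edgeSet hgE⟩, ?_⟩
      rw [phi_eq hgE]
      exact ⟨_, _, rfl,
        fun hcm => hpq (congrArg (fun z : InflVert G => z.val.1) hcm), rfl⟩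
    · intro f hf
      obtain ⟨-, a, b, rfl, hab, h2ab⟩ := Finset.mem_filter.mp hf
      show c' s(a, b) * x' s(a, b) = c (psi G s(a, b)) * x (psi G s(a, b))
      have hpsieq : psi G s(a, b) = a.val.2 := by
        rw [psi, Sym2.map_pair_eq]
        exact (snd_eq_pair hab h2ab).2.symm
      rw [hpsieq, hc'in a b hab h2ab, hx'in a b hab h2ab]
  exact ⟨⟨hbound, part2, part3⟩, hobj⟩


end TwoNCTAP
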